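/- arXiv:0901.2524 — 2 statements merged into one kernel-verified Lean document; each statement's English description precedes it below -/
import Mathlib

section
/- Let (X,d,μ) be a space of homogeneous type satisfying the standing assumptions, and let 1 ≤ q ≤ α ≤ p₁ < p₂ < ∞. Then there exist constants C, C' > 0 independent of r such that for every μ-measurable f on X and every r > 0, _r‖f‖_{q,∞,α} ≤ C · _r‖f‖_{q,p₂,α} ≤ C' · _r‖f‖_{q,p₁,α}. -/
open MeasureTheory Set ENNReal Filter

noncomputable section

variable {X : Type*}

/-- Ball of a quasi-metric `d`, center `x`, radius `r`. -/
def qball (d : X → X → ℝ) (x : X) (r : ℝ) : Set X := {y | d x y < r}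

/-- The amalgam-type quantity `_r‖f‖_{q,p,α}` (with the convention `1/∞ = 0`
given by `ENNReal.toReal`). -/
def amalgamNorm [MeasurableSpace X] (μ : Measure X) (d : X → X → ℝ)
    (q p α : ℝ≥0∞) (r : ℝ) (f : X → ℂ) : ℝ≥0∞ :=
  if p = ∞ then
    ⨆ y : X, μ (qball d y r) ^ (1 / α.toReal - 1 / q.toReal) *
      eLpNorm ((qball d y r).indicator f) q μ
  else
    (∫⁻ y, (μ (qball d y r) ^ (1 / α.toReal - 1 / p.toReal - 1 / q.toReal) *
      eLpNorm ((qball d y r).indicator f) q μ) ^ p.toReal ∂μ) ^ (1 / p.toReal)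

lemma aux_rpow_anti {x y : ℝ≥0∞} {z : ℝ} (hxy : x ≤ y) (hz : z ≤ 0) : y ^ z ≤ x ^ z := by
  have h := ENNReal.rpow_le_rpow hxy (neg_nonneg.mpr hz)
  rw [← neg_neg z, ENNReal.rpow_neg y, ENNReal.rpow_neg x]
  exact ENNReal.inv_le_inv.mpr h

lemma qball_mono (d : X → X → ℝ) (x : X) {r R : ℝ} (h : r ≤ R) :
    qball d x r ⊆ qball d x R := fun w hw => lt_of_lt_of_le hw h

lemma qball_chain {d : X → X → ℝ} {κ : ℝ} (hκ : 1 ≤ κ)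
    (htri : ∀ x y z, d x y ≤ κ * (d x z + d z y)) {x y : X} {s r R : ℝ}
    (hxy : d x y < s) (hR : κ * (s + r) ≤ R) : qball d y r ⊆ qball d x R := by
  intro w hw
  have h1 : d x w ≤ κ * (d x y + d y w) := htri x w y
  have h2 : κ * (d x y + d y w) < κ * (s + r) :=
    mul_lt_mul_of_pos_left (add_lt_add hxy hw) (lt_of_lt_of_le one_pos hκ)
  exact lt_of_le_of_lt h1 (lt_of_lt_of_le h2 hR)

lemma qdouble_pow [MeasurableSpace X] (μ : Measure X) (d : X → X → ℝ) {C' : ℝ}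
    (hdouble : ∀ x r, 0 < r → μ (qball d x (2 * r)) ≤ ENNReal.ofReal C' * μ (qball d x r)) :
    ∀ (n : ℕ) (x : X) (t : ℝ), 0 < t →
      μ (qball d x ((2 : ℝ) ^ n * t)) ≤ (ENNReal.ofReal C') ^ n * μ (qball d x t) := by
  intro n
  induction n with
  | zero => intro x t ht; simp
  | succ n ih =>
    intro x t ht
    have h1 : (2 : ℝ) ^ (n + 1) * t = 2 * ((2 : ℝ) ^ n * t) := by ring
    have h2 : (0 : ℝ) < (2 : ℝ) ^ n * t := by positivity
    calc μ (qball d x ((2 : ℝ) ^ (n + 1) * t)) = μ (qball d x (2 * ((2 : ℝ) ^ n * t))) := by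
          rw [h1]
      _ ≤ ENNReal.ofReal C' * μ (qball d x ((2 : ℝ) ^ n * t)) := hdouble x _ h2
      _ ≤ ENNReal.ofReal C' * ((ENNReal.ofReal C') ^ n * μ (qball d x t)) :=
          mul_le_mul_right (ih x t ht) _
      _ = (ENNReal.ofReal C') ^ (n + 1) * μ (qball d x t) := by ring

lemma qcmp [MeasurableSpace X] (μ : Measure X) (d : X → X → ℝ) {κ C' : ℝ}
    (hdouble : ∀ x r, 0 < r → μ (qball d x (2 * r)) ≤ ENNReal.ofReal C' * μ (qball d x r))
    {m : ℕ} (hm : (12 * κ ^ 4 : ℝ) ≤ 2 ^ m) :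
    ∀ (x : X) (ρ R : ℝ), 0 < ρ → R ≤ 12 * κ ^ 4 * ρ →
      μ (qball d x R) ≤ (ENNReal.ofReal C') ^ m * μ (qball d x ρ) := by
  intro x ρ R hρ hR
  have h1 : R ≤ (2 : ℝ) ^ m * ρ := le_trans hR (mul_le_mul_of_nonneg_right hm hρ.le)
  calc μ (qball d x R) ≤ μ (qball d x ((2 : ℝ) ^ m * ρ)) := measure_mono (qball_mono d x h1)
    _ ≤ (ENNReal.ofReal C') ^ m * μ (qball d x ρ) := qdouble_pow μ d hdouble m x ρ hρ

lemma qcover [MeasurableSpace X] (μ : Measure X) (d : X → X → ℝ) {κ C' : ℝ} (hκ : 1 ≤ κ)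
    (hsymm : ∀ x y, d x y = d y x) (hd0 : ∀ x, d x x = 0)
    (htri : ∀ x y z, d x y ≤ κ * (d x z + d z y))
    (hmeas : ∀ x r, MeasurableSet (qball d x r))
    (hpos : ∀ x r, 0 < r → 0 < μ (qball d x r))
    (hfin : ∀ x r, μ (qball d x r) < ∞)
    (hdouble : ∀ x r, 0 < r → μ (qball d x (2 * r)) ≤ ENNReal.ofReal C' * μ (qball d x r))
    {m : ℕ} (hm : (12 * κ ^ 4 : ℝ) ≤ 2 ^ m) (y : X) (r : ℝ) (hr : 0 < r) :
    ∃ T : Finset X, (↑T : Set X) ⊆ qball d y r ∧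
      (qball d y r ⊆ ⋃ t ∈ T, qball d t (r / (2 * κ))) ∧
      (T.card : ℝ≥0∞) ≤ (ENNReal.ofReal C') ^ m := by
  have hκ0 : (0 : ℝ) < κ := lt_of_lt_of_le one_pos hκ
  set s : ℝ := r / (2 * κ) with hs
  set ρ : ℝ := r / (4 * κ ^ 2) with hρ
  have hs0 : 0 < s := by positivity
  have hρ0 : 0 < ρ := by positivity
  have h2κρ : 2 * κ * ρ = s := by rw [hρ, hs]; field_simp; norm_num
  -- the family of s-separated subsets of qball d y r
  set Sep : Set (Set X) := {T | T ⊆ qball d y r ∧ T.Pairwise (fun a b => s ≤ d a b)} with hSep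
  obtain ⟨M, hM⟩ : ∃ M, Maximal (· ∈ Sep) M := by
    apply zorn_subset
    intro c hc hchain
    refine ⟨⋃₀ c, ⟨?_, ?_⟩, fun t ht => subset_sUnion_of_mem ht⟩
    · exact sUnion_subset fun t ht => (hc ht).1
    · intro a ha b hb hab
      obtain ⟨A, hA, haA⟩ := ha
      obtain ⟨B, hB, hbB⟩ := hb
      rcases hchain.total hA hB with h | h
      · exact (hc hB).2 (h haA) hbB hab
      · exact (hc hA).2 haA (h hbB) hab
  have hMsub : M ⊆ qball d y r := hM.prop.1
  have hMsep : M.Pairwise (fun a b => s ≤ d a b) := hM.prop.2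
  -- cardinality bound for finite subsets of M
  have hMbig : (0 : ℝ≥0∞) < μ (qball d y (2 * κ * r)) := hpos y _ (by positivity)
  have hMfin' : μ (qball d y (2 * κ * r)) ≠ ∞ := (hfin y _).ne
  have hcard : ∀ S : Finset X, (↑S : Set X) ⊆ M → (S.card : ℝ≥0∞) ≤ (ENNReal.ofReal C') ^ m := by
    intro S hS
    have hdisj : (↑S : Set X).PairwiseDisjoint (fun t => qball d t ρ) := by
      intro a ha b hb hab
      refine Set.disjoint_left.mpr fun w hwa hwb => ?_
      have h1 : d a b ≤ κ * (d a w + d w b) := htri a b w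
      have hwb' : d w b < ρ := by rw [hsymm w b]; exact hwb
      have h2 : d a w + d w b < ρ + ρ := add_lt_add hwa hwb' 
      have h3 : d a b < κ * (ρ + ρ) := lt_of_le_of_lt h1 (by
        exact mul_lt_mul_of_pos_left h2 hκ0)
      have h4 : κ * (ρ + ρ) = s := by rw [← h2κρ]; ring
      have h5 := hMsep (hS ha) (hS hb) hab
      rw [h4] at h3; linarith
    have hunion : μ (⋃ t ∈ S, qball d t ρ) = ∑ t ∈ S, μ (qball d t ρ) :=
      measure_biUnion_finset hdisj (fun t _ => hmeas t ρ)
    have hsub2 : (⋃ t ∈ S, qball d t ρ) ⊆ qball d y (2 * κ * r) := by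
      refine Set.iUnion₂_subset fun t ht => ?_
      have h1 : d y t < r := hMsub (hS ht)
      refine qball_chain hκ htri h1 ?_
      have hρr : ρ ≤ r := by
        rw [hρ]; apply div_le_self hr.le; nlinarith
      nlinarith [mul_le_mul_of_nonneg_left hρr hκ0.le]
    have hlow : ∀ t ∈ S, μ (qball d y (2 * κ * r)) ≤
        (ENNReal.ofReal C') ^ m * μ (qball d t ρ) := by
      intro t ht
      have h1 : d t y < r := by
        have h0 : d y t < r := hMsub (hS ht)
        rw [hsymm t y]; exact h0
      have h2 : qball d y (2 * κ * r) ⊆ qball d t (3 * κ ^ 2 * r) := by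
        refine qball_chain hκ htri h1 ?_
        nlinarith [mul_nonneg (mul_nonneg hκ0.le (sub_nonneg.mpr hκ)) hr.le]
      calc μ (qball d y (2 * κ * r)) ≤ μ (qball d t (3 * κ ^ 2 * r)) := measure_mono h2
        _ ≤ (ENNReal.ofReal C') ^ m * μ (qball d t ρ) := by
            refine qcmp μ d hdouble hm t ρ _ hρ0 ?_
            have he : 12 * κ ^ 4 * ρ = 3 * κ ^ 2 * r := by
              rw [hρ]; field_simp; ring
            rw [he]
    have key : (S.card : ℝ≥0∞) * μ (qball d y (2 * κ * r)) ≤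
        (ENNReal.ofReal C') ^ m * μ (qball d y (2 * κ * r)) := by
      calc (S.card : ℝ≥0∞) * μ (qball d y (2 * κ * r))
          = ∑ _t ∈ S, μ (qball d y (2 * κ * r)) := by
            rw [Finset.sum_const, nsmul_eq_mul]
        _ ≤ ∑ t ∈ S, (ENNReal.ofReal C') ^ m * μ (qball d t ρ) := Finset.sum_le_sum hlow
        _ = (ENNReal.ofReal C') ^ m * ∑ t ∈ S, μ (qball d t ρ) := by
            rw [Finset.mul_sum]
        _ = (ENNReal.ofReal C') ^ m * μ (⋃ t ∈ S, qball d t ρ) := by rw [hunion]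
        _ ≤ (ENNReal.ofReal C') ^ m * μ (qball d y (2 * κ * r)) :=
            mul_le_mul_right (measure_mono hsub2) _
    exact (ENNReal.mul_le_mul_iff_left hMbig.ne' hMfin').mp key
  -- M is finite
  have hMfin : M.Finite := by
    by_contra hinf
    have hinf' : M.Infinite := hinf
    obtain ⟨n, hn⟩ : ∃ n : ℕ, (ENNReal.ofReal C') ^ m < n :=
      ENNReal.exists_nat_gt (pow_ne_top ENNReal.ofReal_ne_top)
    obtain ⟨t, htM, htfin, htcard⟩ := hinf'.exists_subset_ncard_eq n
    have := hcard htfin.toFinset (by simpa using htM)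
    rw [Set.ncard_eq_toFinset_card t htfin] at htcard
    rw [htcard] at this
    exact absurd this (not_le.mpr hn)
  refine ⟨hMfin.toFinset, by simpa using hMsub, ?_, ?_⟩
  · -- coverage
    intro x hx
    by_cases hxM : x ∈ M
    · refine Set.mem_biUnion (hMfin.mem_toFinset.mpr hxM) ?_
      show d x x < s
      rw [hd0 x]; exact hs0
    · by_contra hcov
      have hfar : ∀ t ∈ M, s ≤ d t x := by
        intro t ht
        by_contra h
        push_neg at h
        exact hcov (Set.mem_biUnion (hMfin.mem_toFinset.mpr ht) h)
      have hins : insert x M ∈ Sep := by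
        constructor
        · exact Set.insert_subset hx hMsub
        · refine Set.Pairwise.insert hMsep fun b hb hbx => ?_
          constructor
          · rw [hsymm x b]; exact hfar b hb
          · exact hfar b hb
      have := hM.2 hins (Set.subset_insert x M)
      exact hxM (this (Set.mem_insert x M))
  · exact hcard hMfin.toFinset (subset_of_eq (Set.Finite.coe_toFinset hMfin))


-- Lemma A : pointwise sup bound
set_option maxHeartbeats 1000000 in
lemma lemA [MeasurableSpace X] (μ : Measure X) (d : X → X → ℝ) {κ C' : ℝ} (hκ : 1 ≤ κ)
    (hsymm : ∀ x y, d x y = d y x) (hd0 : ∀ x, d x x = 0)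
    (htri : ∀ x y z, d x y ≤ κ * (d x z + d z y))
    (hmeas : ∀ x r, MeasurableSet (qball d x r))
    (hpos : ∀ x r, 0 < r → 0 < μ (qball d x r))
    (hfin : ∀ x r, μ (qball d x r) < ∞)
    (hC' : 1 < C')
    (hdouble : ∀ x r, 0 < r → μ (qball d x (2 * r)) ≤ ENNReal.ofReal C' * μ (qball d x r))
    {m : ℕ} (hm : (12 * κ ^ 4 : ℝ) ≤ 2 ^ m)
    (q α p : ℝ≥0∞) (hq : 1 ≤ q) (hqα : q ≤ α) (hαp : α ≤ p) (hp : p ≠ ∞)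
    (f : X → ℂ) (hf : Measurable f) (r : ℝ) (hr : 0 < r) (y : X) :
    μ (qball d y r) ^ (1 / α.toReal - 1 / q.toReal) *
      eLpNorm ((qball d y r).indicator f) q μ ≤
    (ENNReal.ofReal C') ^ (4 * m) * amalgamNorm μ d q p α r f := by
  have hκ0 : (0 : ℝ) < κ := lt_of_lt_of_le one_pos hκ
  set D : ℝ≥0∞ := (ENNReal.ofReal C') ^ m with hD
  have hD1 : 1 ≤ D := one_le_pow_of_one_le' (ENNReal.one_le_ofReal.mpr hC'.le) m
  have hD0 : D ≠ 0 := by positivity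
  have hDt : D ≠ ∞ := pow_ne_top ENNReal.ofReal_ne_top
  -- exponents
  have hq't : q ≠ ∞ := (lt_of_le_of_lt (hqα.trans hαp) (lt_top_iff_ne_top.mpr hp)).ne
  have hα't : α ≠ ∞ := (lt_of_le_of_lt hαp (lt_top_iff_ne_top.mpr hp)).ne
  have hq1 : 1 ≤ q.toReal := by
    rw [← ENNReal.toReal_one]; exact ENNReal.toReal_mono hq't hq
  have hα1 : 1 ≤ α.toReal := by
    rw [← ENNReal.toReal_one]; exact ENNReal.toReal_mono hα't (le_trans hq hqα)
  have hp1 : 1 ≤ p.toReal := by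
    rw [← ENNReal.toReal_one]
    exact ENNReal.toReal_mono hp (le_trans hq (hqα.trans hαp))
  have hqαr : q.toReal ≤ α.toReal := ENNReal.toReal_mono hα't hqα
  set b : ℝ := 1 / α.toReal - 1 / q.toReal with hb
  set a : ℝ := 1 / α.toReal - 1 / p.toReal - 1 / q.toReal with ha
  have hb0 : b ≤ 0 := by
    rw [hb]; simp only [sub_nonpos]
    exact one_div_le_one_div_of_le (by linarith) hqαr
  have ha0 : a ≤ 0 := by
    have h1 : 0 ≤ 1 / p.toReal := by positivity
    have h2 := hb0
    rw [hb] at h2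
    rw [ha]; linarith
  have hab3 : -a - b ≤ 3 := by
    rw [ha, hb]
    have h1 : 1 / p.toReal ≤ 1 := by
      rw [div_le_one (by linarith)]; linarith
    have h2 : 1 / q.toReal ≤ 1 := by
      rw [div_le_one (by linarith)]; linarith
    have h3 : 0 ≤ 1 / α.toReal := by positivity
    linarith
  -- setup
  set s : ℝ := r / (2 * κ) with hsdef
  have hs0 : 0 < s := by positivity
  have hsr : s ≤ r := by
    rw [hsdef]; apply div_le_self hr.le; linarith
  obtain ⟨T, hTsub, hTcov, hTcard⟩ :=
    qcover μ d hκ hsymm hd0 htri hmeas hpos hfin hdouble hm y r hr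
  rw [← hsdef] at hTcov
  simp only [amalgamNorm, if_neg hp]
  set b : ℝ := 1 / α.toReal - 1 / q.toReal with hb2
  set a : ℝ := 1 / α.toReal - 1 / p.toReal - 1 / q.toReal with ha2
  have hb2b : b = 1 / α.toReal - 1 / q.toReal := hb2
  have hbab : a = b - 1 / p.toReal := by rw [ha2, hb2]; ring
  set V : ℝ≥0∞ := μ (qball d y r) with hV
  have hV0 : V ≠ 0 := (hpos y r hr).ne'
  have hVt : V ≠ ∞ := (hfin y r).ne
  set A : ℝ≥0∞ := (∫⁻ z, (μ (qball d z r) ^ a *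
    eLpNorm ((qball d z r).indicator f) q μ) ^ p.toReal ∂μ) ^ (1 / p.toReal) with hA
  have hp0 : p.toReal ≠ 0 := by linarith
  -- Step 2 : per-piece bound
  have step2 : ∀ t ∈ T, V ^ b * eLpNorm ((qball d t s).indicator f) q μ ≤ D ^ (3:ℕ) * A := by
    intro t ht
    have hty : d y t < r := hTsub ht
    set W : ℝ≥0∞ := μ (qball d t s) with hW
    have hW0 : W ≠ 0 := (hpos t s hs0).ne'
    have hWt : W ≠ ∞ := (hfin t s).ne
    set E : ℝ≥0∞ := eLpNorm ((qball d t s).indicator f) q μ with hE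
    have hκs : κ * s = r / 2 := by rw [hsdef]; field_simp
    have hκ3 : κ ≤ κ ^ 3 := by
      nlinarith [mul_nonneg (mul_nonneg hκ0.le (sub_nonneg.mpr hκ)) (by linarith : (0:ℝ) ≤ κ + 1)]
    have hκ4 : κ ≤ κ ^ 4 := by
      nlinarith [mul_nonneg (mul_nonneg (mul_nonneg hκ0.le hκ0.le) hκ0.le) (sub_nonneg.mpr hκ), hκ3]
    have hzup : ∀ z ∈ qball d t s, μ (qball d z r) ≤ D * W := by
      intro z hz
      have h1 : qball d z r ⊆ qball d t (2 * κ * r) := by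
        refine qball_chain hκ htri hz ?_
        nlinarith [hr, hκ]
      calc μ (qball d z r) ≤ μ (qball d t (2 * κ * r)) := measure_mono h1
        _ ≤ D * W := by
            refine qcmp μ d hdouble hm t s _ hs0 ?_
            have h12 : 12 * κ ^ 4 * s = 6 * κ ^ 3 * r := by rw [hsdef]; field_simp; ring
            nlinarith [mul_le_mul_of_nonneg_left hκ3 (by positivity : (0:ℝ) ≤ 2 * r),
              mul_nonneg (pow_nonneg hκ0.le 3) hr.le]
    have hElow : ∀ z ∈ qball d t s, E ≤ eLpNorm ((qball d z r).indicator f) q μ := by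
      intro z hz
      have hzt : d z t < s := by rw [hsymm z t]; exact hz
      have hsub : qball d t s ⊆ qball d z r := by
        refine qball_chain hκ htri hzt ?_
        nlinarith [hκs]
      apply eLpNorm_mono
      intro x
      by_cases hx : x ∈ qball d t s
      · rw [Set.indicator_of_mem hx, Set.indicator_of_mem (hsub hx)]
      · rw [Set.indicator_of_notMem hx]; simp
    set c : ℝ≥0∞ := ((D * W) ^ a * E) ^ p.toReal with hc
    have hint : c * W ≤ ∫⁻ z, (μ (qball d z r) ^ a *
        eLpNorm ((qball d z r).indicator f) q μ) ^ p.toReal ∂μ := by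
      have hpt : ∀ z, (qball d t s).indicator (fun _ => c) z ≤ (μ (qball d z r) ^ a *
          eLpNorm ((qball d z r).indicator f) q μ) ^ p.toReal := by
        intro z
        by_cases hz : z ∈ qball d t s
        · rw [Set.indicator_of_mem hz]
          exact ENNReal.rpow_le_rpow
            (mul_le_mul' (aux_rpow_anti (hzup z hz) ha0) (hElow z hz)) (by linarith)
        · rw [Set.indicator_of_notMem hz]; exact zero_le
      calc c * W = ∫⁻ z, (qball d t s).indicator (fun _ => c) z ∂μ := by
            rw [lintegral_indicator (hmeas t s), setLIntegral_const]
        _ ≤ _ := lintegral_mono hpt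
    have hA1 : (c * W) ^ (1 / p.toReal) ≤ A := by
      rw [hA]; exact ENNReal.rpow_le_rpow hint (by positivity)
    have hDb0 : D ≠ 0 := hD0
    have hceq : (c * W) ^ (1 / p.toReal) = D ^ a * (W ^ b * E) := by
      have h1 : c ^ (1 / p.toReal) = (D * W) ^ a * E := by
        rw [hc, ← ENNReal.rpow_mul, mul_one_div, div_self hp0, ENNReal.rpow_one]
      have h2 : W ^ a * W ^ (1 / p.toReal) = W ^ b := by
        rw [← ENNReal.rpow_add _ _ hW0 hWt]; congr 1; rw [hbab]; ring
      calc (c * W) ^ (1 / p.toReal) = c ^ (1 / p.toReal) * W ^ (1 / p.toReal) :=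
            ENNReal.mul_rpow_of_nonneg _ _ (by positivity)
        _ = D ^ a * W ^ a * E * W ^ (1 / p.toReal) := by
            rw [h1, ENNReal.mul_rpow_of_ne_top hDt hWt]
        _ = D ^ a * ((W ^ a * W ^ (1 / p.toReal)) * E) := by ring
        _ = D ^ a * (W ^ b * E) := by rw [h2]
    have hWE : W ^ b * E ≤ D ^ (-a) * A := by
      have h3 : D ^ a * (W ^ b * E) ≤ A := by rw [← hceq]; exact hA1
      have h4 := mul_le_mul_right h3 (D ^ (-a))
      rwa [← mul_assoc, ← ENNReal.rpow_add _ _ hD0 hDt, neg_add_cancel,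
        ENNReal.rpow_zero, one_mul] at h4
    have hWV : W ≤ D * V := by
      have h1 : qball d t s ⊆ qball d y (2 * κ * r) := by
        refine qball_chain hκ htri hty ?_
        linarith [hκs, mul_le_mul_of_nonneg_right hκ hr.le]
      calc W ≤ μ (qball d y (2 * κ * r)) := measure_mono h1
        _ ≤ D * V := by
            refine qcmp μ d hdouble hm y r _ hr ?_
            nlinarith [mul_le_mul_of_nonneg_left hκ4 (by positivity : (0:ℝ) ≤ 2 * r),
              mul_nonneg (pow_nonneg hκ0.le 4) hr.le]
    have hVb : V ^ b ≤ D ^ (-b) * W ^ b := by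
      have h1 : D⁻¹ * W ≤ V := by
        calc D⁻¹ * W ≤ D⁻¹ * (D * V) := mul_le_mul_right hWV _
          _ = V := by rw [← mul_assoc, ENNReal.inv_mul_cancel hD0 hDt, one_mul]
      have h2 : V ^ b ≤ (D⁻¹ * W) ^ b := aux_rpow_anti h1 hb0
      have h3 : (D⁻¹ * W) ^ b = D ^ (-b) * W ^ b := by
        rw [ENNReal.mul_rpow_of_ne_top (ENNReal.inv_ne_top.mpr hD0) hWt,
          ENNReal.inv_rpow, ← ENNReal.rpow_neg]
      rw [← h3]; exact h2
    calc V ^ b * E ≤ (D ^ (-b) * W ^ b) * E := mul_le_mul_left hVb E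
      _ = D ^ (-b) * (W ^ b * E) := by ring
      _ ≤ D ^ (-b) * (D ^ (-a) * A) := mul_le_mul_right hWE _
      _ = (D ^ (-b) * D ^ (-a)) * A := by ring
      _ = D ^ (-b + -a) * A := by rw [ENNReal.rpow_add _ _ hD0 hDt]
      _ ≤ D ^ ((3:ℕ):ℝ) * A := by
          refine mul_le_mul_left (ENNReal.rpow_le_rpow_of_exponent_le hD1 ?_) A
          push_cast; linarith
      _ = D ^ (3:ℕ) * A := by rw [ENNReal.rpow_natCast]
  -- Step 1 : covering subadditivity
  have step1 : eLpNorm ((qball d y r).indicator f) q μ ≤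
      ∑ t ∈ T, eLpNorm ((qball d t s).indicator f) q μ := by
    have h1 : eLpNorm ((qball d y r).indicator f) q μ ≤
        eLpNorm (∑ t ∈ T, fun x => ‖(qball d t s).indicator f x‖) q μ := by
      apply eLpNorm_mono
      intro x
      simp only [Finset.sum_apply]
      have hnn : 0 ≤ ∑ t ∈ T, ‖(qball d t s).indicator f x‖ :=
        Finset.sum_nonneg fun t _ => norm_nonneg _
      rw [Real.norm_of_nonneg hnn]
      by_cases hx : x ∈ qball d y r
      · obtain ⟨t, ht, hxt⟩ := Set.mem_iUnion₂.mp (hTcov hx)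
        rw [Set.indicator_of_mem hx]
        calc ‖f x‖ = ‖(qball d t s).indicator f x‖ := by rw [Set.indicator_of_mem hxt]
          _ ≤ ∑ t ∈ T, ‖(qball d t s).indicator f x‖ :=
            Finset.single_le_sum (f := fun u => ‖(qball d u s).indicator f x‖)
              (fun u _ => norm_nonneg _) ht
      · rw [Set.indicator_of_notMem hx]; simpa using hnn
    have h2 : eLpNorm (∑ t ∈ T, fun x => ‖(qball d t s).indicator f x‖) q μ ≤
        ∑ t ∈ T, eLpNorm (fun x => ‖(qball d t s).indicator f x‖) q μ :=
      eLpNorm_sum_le (fun t _ => ((hf.indicator (hmeas t s)).norm).aestronglyMeasurable) hq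
    calc eLpNorm ((qball d y r).indicator f) q μ ≤ _ := h1
      _ ≤ ∑ t ∈ T, eLpNorm (fun x => ‖(qball d t s).indicator f x‖) q μ := h2
      _ = ∑ t ∈ T, eLpNorm ((qball d t s).indicator f) q μ :=
          Finset.sum_congr rfl fun t _ => eLpNorm_norm _
  -- combine
  calc V ^ b * eLpNorm ((qball d y r).indicator f) q μ
      ≤ V ^ b * ∑ t ∈ T, eLpNorm ((qball d t s).indicator f) q μ :=
        mul_le_mul_right step1 _
    _ = ∑ t ∈ T, V ^ b * eLpNorm ((qball d t s).indicator f) q μ := Finset.mul_sum _ _ _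
    _ ≤ ∑ _t ∈ T, D ^ (3:ℕ) * A := Finset.sum_le_sum step2
    _ = (T.card : ℝ≥0∞) * (D ^ (3:ℕ) * A) := by rw [Finset.sum_const, nsmul_eq_mul]
    _ ≤ D * (D ^ (3:ℕ) * A) := mul_le_mul_left hTcard _
    _ = ((ENNReal.ofReal C') ^ m * ((ENNReal.ofReal C') ^ m) ^ (3:ℕ)) * A := by rw [hD]; ring
    _ = (ENNReal.ofReal C') ^ (4 * m) * A := by
        rw [← pow_mul, ← pow_add]; congr 1; ring

set_option maxHeartbeats 1000000 in
/-- monotonicity (up to constants independent of `r`) of the amalgam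
norm in the global exponent. -/
theorem amalgamNorm_mono_p [MeasurableSpace X] (μ : Measure X) (d : X → X → ℝ)
    (κ : ℝ) (hκ : 1 ≤ κ)
    (hsymm : ∀ x y, d x y = d y x) (hd0 : ∀ x, d x x = 0) (hdnn : ∀ x y, 0 ≤ d x y)
    (htri : ∀ x y z, d x y ≤ κ * (d x z + d z y))
    (hmeas : ∀ x r, MeasurableSet (qball d x r))
    (hpos : ∀ x r, 0 < r → 0 < μ (qball d x r))
    (hfin : ∀ x r, μ (qball d x r) < ∞)
    (hXinf : μ Set.univ = ∞)
    (hsep : ∃ D : Set X, D.Countable ∧ ∀ x : X, ∀ ε : ℝ, 0 < ε → ∃ y ∈ D, d x y < ε)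
    (hann : ∀ x r R, 0 < r → r < R → (qball d x R \ qball d x r).Nonempty)
    (C' : ℝ) (hC' : 1 < C')
    (hdouble : ∀ x r, 0 < r → μ (qball d x (2 * r)) ≤ ENNReal.ofReal C' * μ (qball d x r))
    (q α p₁ p₂ : ℝ≥0∞) (hq : 1 ≤ q) (hqα : q ≤ α) (hαp₁ : α ≤ p₁) (hp₁₂ : p₁ < p₂)
    (hp₂ : p₂ < ∞) :
    ∃ C Cc : ℝ, 0 < C ∧ 0 < Cc ∧
      ∀ (f : X → ℂ), Measurable f → ∀ r : ℝ, 0 < r →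
        amalgamNorm μ d q ∞ α r f ≤ ENNReal.ofReal C * amalgamNorm μ d q p₂ α r f ∧
        amalgamNorm μ d q p₂ α r f ≤ ENNReal.ofReal Cc * amalgamNorm μ d q p₁ α r f := by
  have hκ0 : (0 : ℝ) < κ := lt_of_lt_of_le one_pos hκ
  obtain ⟨m, hm'⟩ := exists_nat_gt (12 * κ ^ 4)
  have hm : (12 * κ ^ 4 : ℝ) ≤ 2 ^ m := by
    refine le_trans hm'.le ?_
    have h := Nat.lt_two_pow_self (n := m)
    calc (m : ℝ) ≤ ((2 ^ m : ℕ) : ℝ) := by exact_mod_cast h.le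
      _ = 2 ^ m := by push_cast; ring
  set C : ℝ := max (C' ^ (4 * m)) 1 with hCdef
  have hC1 : (1 : ℝ) ≤ C := le_max_right _ _
  have hCpos : (0 : ℝ) < C := lt_of_lt_of_le one_pos hC1
  have hC0ne : ENNReal.ofReal C ≠ 0 := (ENNReal.ofReal_pos.mpr hCpos).ne'
  have hCbound : (ENNReal.ofReal C') ^ (4 * m) ≤ ENNReal.ofReal C := by
    rw [← ENNReal.ofReal_pow (by linarith : (0:ℝ) ≤ C')]
    exact ENNReal.ofReal_le_ofReal (le_max_left _ _)
  have hp₂t : p₂ ≠ ∞ := hp₂.ne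
  have hp₁t : p₁ ≠ ∞ := (hp₁₂.trans hp₂).ne
  have hαp₂ : α ≤ p₂ := hαp₁.trans hp₁₂.le
  have hq1 : (1:ℝ≥0∞) ≤ p₁ := le_trans hq (hqα.trans hαp₁)
  have hp1r : 1 ≤ p₁.toReal := by
    rw [← ENNReal.toReal_one]; exact ENNReal.toReal_mono hp₁t hq1
  have hp2r : 1 ≤ p₂.toReal := by
    rw [← ENNReal.toReal_one]; exact ENNReal.toReal_mono hp₂t (hq1.trans hp₁₂.le)
  have hp12r : p₁.toReal < p₂.toReal := (ENNReal.toReal_lt_toReal hp₁t hp₂t).mpr hp₁₂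
  refine ⟨C, C, hCpos, hCpos, ?_⟩
  intro f hf r hr
  have hsup : ∀ p : ℝ≥0∞, α ≤ p → p ≠ ∞ →
      amalgamNorm μ d q ∞ α r f ≤ ENNReal.ofReal C * amalgamNorm μ d q p α r f := by
    intro p hαp hp
    have h1 : amalgamNorm μ d q ∞ α r f = ⨆ y : X, μ (qball d y r) ^
        (1 / α.toReal - 1 / q.toReal) * eLpNorm ((qball d y r).indicator f) q μ := by
      simp only [amalgamNorm, if_true]
    rw [h1]
    refine iSup_le fun y => ?_
    refine le_trans (lemA μ d hκ hsymm hd0 htri hmeas hpos hfin hC' hdouble hm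
      q α p hq hqα hαp hp f hf r hr y) (mul_le_mul_left hCbound _)
  refine ⟨hsup p₂ hαp₂ hp₂t, ?_⟩
  -- interpolation part
  by_cases hA₁top : amalgamNorm μ d q p₁ α r f = ∞
  · rw [hA₁top, ENNReal.mul_top hC0ne]; exact le_top
  set F : X → ℝ≥0∞ := fun z => μ (qball d z r) ^ (1 / α.toReal - 1 / q.toReal) *
    eLpNorm ((qball d z r).indicator f) q μ with hF
  have hFrw : ∀ p : ℝ≥0∞, p ≠ ∞ → 1 ≤ p.toReal →
      amalgamNorm μ d q p α r f =
        (∫⁻ z, (F z) ^ p.toReal * (μ (qball d z r))⁻¹ ∂μ) ^ (1 / p.toReal) := by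
    intro p hp hp1
    simp only [amalgamNorm, if_neg hp]
    congr 1
    refine lintegral_congr fun z => ?_
    have hx0 : μ (qball d z r) ≠ 0 := (hpos z r hr).ne'
    have hxt : μ (qball d z r) ≠ ∞ := (hfin z r).ne
    have hp0 : p.toReal ≠ 0 := by linarith
    have e1 : 1 / α.toReal - 1 / p.toReal - 1 / q.toReal =
        (1 / α.toReal - 1 / q.toReal) + (-(1 / p.toReal)) := by ring
    calc (μ (qball d z r) ^ (1 / α.toReal - 1 / p.toReal - 1 / q.toReal) *
          eLpNorm ((qball d z r).indicator f) q μ) ^ p.toReal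
        = (μ (qball d z r) ^ ((1 / α.toReal - 1 / q.toReal) + (-(1 / p.toReal))) *
          eLpNorm ((qball d z r).indicator f) q μ) ^ p.toReal := by rw [e1]
      _ = (F z * μ (qball d z r) ^ (-(1 / p.toReal))) ^ p.toReal := by
          rw [ENNReal.rpow_add _ _ hx0 hxt, hF]; ring_nf
      _ = (F z) ^ p.toReal * (μ (qball d z r) ^ (-(1 / p.toReal))) ^ p.toReal :=
          ENNReal.mul_rpow_of_nonneg _ _ (by linarith)
      _ = (F z) ^ p.toReal * (μ (qball d z r))⁻¹ := by
          rw [← ENNReal.rpow_mul, show -(1 / p.toReal) * p.toReal = -1 by field_simp,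
            ENNReal.rpow_neg_one]
  have hSrw : amalgamNorm μ d q ∞ α r f = ⨆ z, F z := by
    simp only [amalgamNorm, if_true]; rfl
  have hFS : ∀ z, F z ≤ amalgamNorm μ d q ∞ α r f := by
    intro z; rw [hSrw]; exact le_iSup F z
  have hSfin : amalgamNorm μ d q ∞ α r f ≠ ∞ := by
    intro htop
    have h := hsup p₁ hαp₁ hp₁t
    rw [htop] at h
    exact (ENNReal.mul_ne_top ENNReal.ofReal_ne_top hA₁top) (top_le_iff.mp h)
  set S := amalgamNorm μ d q ∞ α r f with hSdef
  set δ : ℝ := p₂.toReal - p₁.toReal with hδ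
  have hδ0 : 0 < δ := by rw [hδ]; linarith
  have hp20 : 0 < p₂.toReal := by linarith
  -- pointwise interpolation bound
  have hptw : ∀ z, (F z) ^ p₂.toReal * (μ (qball d z r))⁻¹ ≤
      S ^ δ * ((F z) ^ p₁.toReal * (μ (qball d z r))⁻¹) := by
    intro z
    have key : (F z) ^ p₂.toReal ≤ S ^ δ * (F z) ^ p₁.toReal := by
      by_cases hz : F z = 0
      · rw [hz, ENNReal.zero_rpow_of_pos (by linarith), ENNReal.zero_rpow_of_pos (by linarith),
          mul_zero]
      · have hzt : F z ≠ ∞ := ne_top_of_le_ne_top hSfin (hFS z)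
        have e2 : p₂.toReal = δ + p₁.toReal := by rw [hδ]; ring
        rw [e2, ENNReal.rpow_add _ _ hz hzt]
        exact mul_le_mul_left (ENNReal.rpow_le_rpow (hFS z) hδ0.le) _
    calc (F z) ^ p₂.toReal * (μ (qball d z r))⁻¹ ≤
        (S ^ δ * (F z) ^ p₁.toReal) * (μ (qball d z r))⁻¹ := mul_le_mul_left key _
      _ = S ^ δ * ((F z) ^ p₁.toReal * (μ (qball d z r))⁻¹) := by ring
  have hSδt : S ^ δ ≠ ∞ := ENNReal.rpow_ne_top_of_nonneg hδ0.le hSfin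
  -- main chain
  have hchain : amalgamNorm μ d q p₂ α r f ≤
      S ^ (δ / p₂.toReal) * (amalgamNorm μ d q p₁ α r f) ^ (p₁.toReal / p₂.toReal) := by
    rw [hFrw p₂ hp₂t hp2r, hFrw p₁ hp₁t hp1r]
    calc (∫⁻ z, (F z) ^ p₂.toReal * (μ (qball d z r))⁻¹ ∂μ) ^ (1 / p₂.toReal)
        ≤ (∫⁻ z, S ^ δ * ((F z) ^ p₁.toReal * (μ (qball d z r))⁻¹) ∂μ) ^ (1 / p₂.toReal) :=
          ENNReal.rpow_le_rpow (lintegral_mono hptw) (by positivity)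
      _ = (S ^ δ * ∫⁻ z, (F z) ^ p₁.toReal * (μ (qball d z r))⁻¹ ∂μ) ^ (1 / p₂.toReal) := by
          rw [lintegral_const_mul' _ _ hSδt]
      _ = (S ^ δ) ^ (1 / p₂.toReal) *
          (∫⁻ z, (F z) ^ p₁.toReal * (μ (qball d z r))⁻¹ ∂μ) ^ (1 / p₂.toReal) :=
          ENNReal.mul_rpow_of_nonneg _ _ (by positivity)
      _ = S ^ (δ / p₂.toReal) *
          ((∫⁻ z, (F z) ^ p₁.toReal * (μ (qball d z r))⁻¹ ∂μ) ^ (1 / p₁.toReal)) ^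
            (p₁.toReal / p₂.toReal) := by
          rw [← ENNReal.rpow_mul, ← ENNReal.rpow_mul]
          congr 2
          · rw [mul_one_div]
          · field_simp
  -- conclude
  by_cases hA₁0 : amalgamNorm μ d q p₁ α r f = 0
  · have hS0 : S = 0 := by
      have h := hsup p₁ hαp₁ hp₁t
      rw [hA₁0, mul_zero] at h
      exact le_antisymm h zero_le
    refine le_trans hchain ?_
    rw [hS0, ENNReal.zero_rpow_of_pos (by positivity), zero_mul]
    exact zero_le
  · have hSC : S ≤ ENNReal.ofReal C * amalgamNorm μ d q p₁ α r f := hsup p₁ hαp₁ hp₁t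
    have h2 : S ^ (δ / p₂.toReal) ≤ (ENNReal.ofReal C) ^ (δ / p₂.toReal) *
        (amalgamNorm μ d q p₁ α r f) ^ (δ / p₂.toReal) := by
      rw [← ENNReal.mul_rpow_of_nonneg _ _ (by positivity)]
      exact ENNReal.rpow_le_rpow hSC (by positivity)
    refine le_trans hchain (le_trans (mul_le_mul_left h2 _) ?_)
    rw [mul_assoc, ← ENNReal.rpow_add _ _ hA₁0 hA₁top]
    have e3 : δ / p₂.toReal + p₁.toReal / p₂.toReal = 1 := by
      rw [hδ]; field_simp; ring
    rw [e3, ENNReal.rpow_one]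
    refine mul_le_mul_left ?_ _
    calc (ENNReal.ofReal C) ^ (δ / p₂.toReal) ≤ (ENNReal.ofReal C) ^ (1:ℝ) := by
          refine ENNReal.rpow_le_rpow_of_exponent_le (ENNReal.one_le_ofReal.mpr hC1) ?_
          rw [div_le_one hp20, hδ]; linarith
      _ = ENNReal.ofReal C := ENNReal.rpow_one _
end
end

section
/- (Kolmogorov-type counting estimate.) Let (X,d,μ) be a space of homogeneous type with comparison μ(B(x,r)) ≍ φ(r) uniformly in x (i.e. a·φ(r) ≤ μ(B(x,r)) ≤ b·φ(r) for fixed constants 0 < a ≤ b < ∞ and a nondecreasing φ). Let 1 ≤ q < α, let {E_j} be a pairwise disjoint family of measurable sets each contained in a ball of radius ρ^{m+1} and containing a ball of radius ρ^m (so μ(E_j) ≍ φ(ρ^{m+1})), and let f satisfy A := sup_{α'>0} α' μ({|f| > α'})^{1/α} < ∞. Then there exists C > 0 depending only on α, q, a, b such that for every λ > 0, #{ j : ∫_{E_j} |f|^q dμ > λ } ≤ C φ(ρ^{m+1})^{α/q − 1} λ^{−α/q} A^α. -/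
open MeasureTheory Set ENNReal Filter

noncomputable section

variable {X : Type*}

section aux
variable [MeasurableSpace X] {μ : Measure X} {f : X → ℂ}

lemma weak_bound {α : ℝ} (hα : 0 < α) {A : ℝ≥0∞}
    (hA : ∀ l : ℝ, 0 < l → ENNReal.ofReal l * (μ {x | l < ‖f x‖}) ^ (1 / α) ≤ A)
    {l : ℝ} (hl : 0 < l) :
    μ {x | l < ‖f x‖} ≤ A ^ α * ENNReal.ofReal l ^ (-α) := by
  have h2 : (ENNReal.ofReal l * (μ {x | l < ‖f x‖}) ^ (1 / α)) ^ α ≤ A ^ α :=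
    ENNReal.rpow_le_rpow (hA l hl) hα.le
  rw [ENNReal.mul_rpow_of_nonneg _ _ hα.le, ← ENNReal.rpow_mul, one_div,
    inv_mul_cancel₀ hα.ne', ENNReal.rpow_one] at h2
  have hne : ENNReal.ofReal l ^ α ≠ 0 :=
    (ENNReal.rpow_pos (ENNReal.ofReal_pos.mpr hl) ENNReal.ofReal_ne_top).ne'
  have hnt : ENNReal.ofReal l ^ α ≠ ∞ :=
    ENNReal.rpow_ne_top_of_nonneg hα.le ENNReal.ofReal_ne_top
  calc μ {x | l < ‖f x‖}
      = (ENNReal.ofReal l ^ α)⁻¹ * (ENNReal.ofReal l ^ α * μ {x | l < ‖f x‖}) := by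
        rw [← mul_assoc, ENNReal.inv_mul_cancel hne hnt, one_mul]
    _ ≤ (ENNReal.ofReal l ^ α)⁻¹ * A ^ α := mul_le_mul_right h2 _
    _ = A ^ α * ENNReal.ofReal l ^ (-α) := by rw [ENNReal.rpow_neg, mul_comm]

lemma real_exp_identity {T q α : ℝ} (hT : 0 < T) (k : ℕ) :
    (T * 2 ^ (k + 1)) ^ q * (T * 2 ^ k) ^ (-α)
      = T ^ (q - α) * (2 ^ q * ((2 : ℝ) ^ (q - α)) ^ k) := by
  have h2 : (0:ℝ) < 2 := two_pos
  have e1 : (T * 2 ^ (k + 1) : ℝ) ^ q = T ^ q * 2 ^ (((k:ℝ) + 1) * q) := by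
    rw [Real.mul_rpow hT.le (by positivity), ← Real.rpow_natCast 2 (k + 1),
      ← Real.rpow_mul (by norm_num)]
    push_cast; ring_nf
  have e2 : (T * 2 ^ k : ℝ) ^ (-α) = T ^ (-α) * 2 ^ ((k:ℝ) * (-α)) := by
    rw [Real.mul_rpow hT.le (by positivity), ← Real.rpow_natCast 2 k,
      ← Real.rpow_mul (by norm_num)]
  have e3 : (((2:ℝ) ^ (q - α)) ^ k) = (2:ℝ) ^ ((k:ℝ) * (q - α)) := by
    rw [← Real.rpow_natCast ((2:ℝ) ^ (q - α)) k, ← Real.rpow_mul (by norm_num)]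
    ring_nf
  rw [e1, e2, e3, mul_mul_mul_comm, ← Real.rpow_add hT, ← Real.rpow_add h2,
    ← Real.rpow_add h2]
  congr 1
  ring

lemma kolmo_trunc (hf : Measurable f) {q α : ℝ} (hq : 0 < q) {A : ℝ≥0∞}
    (hA : ∀ l : ℝ, 0 < l → ENNReal.ofReal l * (μ {x | l < ‖f x‖}) ^ (1 / α) ≤ A)
    (hα : 0 < α) (E : Set X) {T : ℝ} (hT : 0 < T) :
    ∫⁻ x in E, (‖f x‖₊ : ℝ≥0∞) ^ q ∂μ
      ≤ ENNReal.ofReal (T ^ q) * μ E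
        + A ^ α * ENNReal.ofReal (T ^ (q - α))
          * (ENNReal.ofReal (2 ^ q) * (1 - ENNReal.ofReal (2 ^ (q - α)))⁻¹) := by
  set g : ℕ → X → ℝ≥0∞ := fun k x =>
    ({y | T * 2 ^ k < ‖f y‖}).indicator (fun _ => ENNReal.ofReal ((T * 2 ^ (k+1)) ^ q)) x
    with hg
  have hsetmeas : ∀ k : ℕ, MeasurableSet {y | T * 2 ^ k < ‖f y‖} := fun k =>
    measurableSet_lt measurable_const hf.norm
  have hgmeas : ∀ k, Measurable (g k) := fun k =>
    Measurable.indicator measurable_const (hsetmeas k)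
  -- pointwise bound
  have hpt : ∀ x, (‖f x‖₊ : ℝ≥0∞) ^ q ≤ ENNReal.ofReal (T ^ q) + ∑' k, g k x := by
    intro x
    have hcoe : (‖f x‖₊ : ℝ≥0∞) = ENNReal.ofReal ‖f x‖ := (ofReal_norm _).symm
    rcases le_or_gt ‖f x‖ T with h | h
    · refine le_trans ?_ le_self_add
      rw [hcoe, ← ENNReal.ofReal_rpow_of_pos hT]
      exact ENNReal.rpow_le_rpow (ENNReal.ofReal_le_ofReal h) hq.le
    · have hex : ∃ n : ℕ, ‖f x‖ ≤ T * 2 ^ n := by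
        obtain ⟨n, hn⟩ := pow_unbounded_of_one_lt (‖f x‖ / T) one_lt_two
        exact ⟨n, by rw [div_lt_iff₀ hT] at hn; linarith [hn]⟩
      set n := Nat.find hex with hn
      have hspec : ‖f x‖ ≤ T * 2 ^ n := Nat.find_spec hex
      have hn0 : n ≠ 0 := by
        intro h0
        rw [h0] at hspec
        simp only [pow_zero, mul_one] at hspec
        linarith
      obtain ⟨k, hk⟩ : ∃ k, n = k + 1 := ⟨n - 1, (Nat.succ_pred_eq_of_pos (Nat.pos_of_ne_zero hn0)).symm⟩
      have hkmem : T * 2 ^ k < ‖f x‖ := by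
        have := Nat.find_min hex (by omega : k < n)
        linarith [not_le.mp this]
      have hgk : g k x = ENNReal.ofReal ((T * 2 ^ (k+1)) ^ q) := by
        rw [hg]; simp only [indicator_of_mem, mem_setOf_eq, hkmem]
      refine le_trans ?_ le_add_self
      refine le_trans ?_ (ENNReal.le_tsum k)
      rw [hgk, hcoe, ← ENNReal.ofReal_rpow_of_pos (by positivity : (0:ℝ) < T * 2 ^ (k+1))]
      refine ENNReal.rpow_le_rpow (ENNReal.ofReal_le_ofReal ?_) hq.le
      rw [← hk]; exact hspec
  calc ∫⁻ x in E, (‖f x‖₊ : ℝ≥0∞) ^ q ∂μ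
      ≤ ∫⁻ x in E, (ENNReal.ofReal (T ^ q) + ∑' k, g k x) ∂μ := lintegral_mono hpt
    _ = ENNReal.ofReal (T ^ q) * μ E + ∑' k, ∫⁻ x in E, g k x ∂μ := by
        rw [lintegral_add_left measurable_const, setLIntegral_const,
          lintegral_tsum (fun k => ((hgmeas k).aemeasurable))]
    _ ≤ ENNReal.ofReal (T ^ q) * μ E
        + A ^ α * ENNReal.ofReal (T ^ (q - α))
          * (ENNReal.ofReal (2 ^ q) * (1 - ENNReal.ofReal (2 ^ (q - α)))⁻¹) := by
        gcongr
        calc ∑' k, ∫⁻ x in E, g k x ∂μ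
            ≤ ∑' k, A ^ α * (ENNReal.ofReal (T ^ (q - α) * 2 ^ q)
                * ENNReal.ofReal ((2:ℝ) ^ (q - α)) ^ k) := by
              refine ENNReal.tsum_le_tsum fun k => ?_
              have hTk : (0:ℝ) < T * 2 ^ k := by positivity
              calc ∫⁻ x in E, g k x ∂μ
                  ≤ ∫⁻ x, g k x ∂μ := setLIntegral_le_lintegral _ _
                _ = ENNReal.ofReal ((T * 2 ^ (k+1)) ^ q) * μ {y | T * 2 ^ k < ‖f y‖} :=
                    lintegral_indicator_const (hsetmeas k) _
                _ ≤ ENNReal.ofReal ((T * 2 ^ (k+1)) ^ q)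
                      * (A ^ α * ENNReal.ofReal (T * 2 ^ k) ^ (-α)) :=
                    mul_le_mul_right (weak_bound hα hA hTk) _
                _ = A ^ α * ENNReal.ofReal ((T * 2 ^ (k+1)) ^ q * (T * 2 ^ k) ^ (-α)) := by
                    rw [ENNReal.ofReal_rpow_of_pos hTk, ENNReal.ofReal_mul (by positivity)]
                    ring
                _ = A ^ α * (ENNReal.ofReal (T ^ (q - α) * 2 ^ q)
                      * ENNReal.ofReal ((2:ℝ) ^ (q - α)) ^ k) := by
                    rw [real_exp_identity hT k, ← mul_assoc (T ^ (q - α)),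
                      ENNReal.ofReal_mul (by positivity), ENNReal.ofReal_pow (by positivity)]
          _ = A ^ α * ENNReal.ofReal (T ^ (q - α))
                * (ENNReal.ofReal (2 ^ q) * (1 - ENNReal.ofReal (2 ^ (q - α)))⁻¹) := by
              rw [ENNReal.tsum_mul_left, ENNReal.tsum_mul_left, ENNReal.tsum_geometric,
                ENNReal.ofReal_mul (by positivity)]
              ring

lemma kolmo_C_lt_top {q α : ℝ} (hq : 0 < q) (hqα : q < α) :
    (1 : ℝ≥0∞) + ENNReal.ofReal (2 ^ q) * (1 - ENNReal.ofReal (2 ^ (q - α)))⁻¹ ≠ ∞ := by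
  have hlt : ENNReal.ofReal (2 ^ (q - α)) < 1 := by
    rw [← ENNReal.ofReal_one]
    exact ENNReal.ofReal_lt_ofReal_iff_of_nonneg (by positivity) |>.mpr
      (Real.rpow_lt_one_of_one_lt_of_neg one_lt_two (by linarith))
  have : (1 - ENNReal.ofReal (2 ^ (q - α)))⁻¹ ≠ ∞ := by
    rw [Ne, ENNReal.inv_eq_top, tsub_eq_zero_iff_le]
    exact hlt.not_ge
  exact ENNReal.add_ne_top.mpr ⟨ENNReal.one_ne_top, ENNReal.mul_ne_top ENNReal.ofReal_ne_top this⟩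

lemma kolmogorov_ineq {μ : Measure X} {f : X → ℂ} (hf : Measurable f) {q α : ℝ}
    (hq : 0 < q) (hqα : q < α) (hα : 0 < α) {A : ℝ≥0∞} (hAtop : A ≠ ∞)
    (hA : ∀ l : ℝ, 0 < l → ENNReal.ofReal l * (μ {x | l < ‖f x‖}) ^ (1 / α) ≤ A)
    (E : Set X) (hE : μ E ≠ ∞) :
    ∫⁻ x in E, (‖f x‖₊ : ℝ≥0∞) ^ q ∂μ
      ≤ ((1 : ℝ≥0∞) + ENNReal.ofReal (2 ^ q) * (1 - ENNReal.ofReal (2 ^ (q - α)))⁻¹)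
          * A ^ q * μ E ^ (1 - q / α) := by
  rcases eq_or_ne (μ E) 0 with hE0 | hE0
  · rw [Measure.restrict_eq_zero.mpr hE0, lintegral_zero_measure]
    exact zero_le
  rcases eq_or_ne A 0 with hA0 | hA0
  · -- f = 0 a.e., integral is 0
    have hnull : μ {x | 0 < ‖f x‖} = 0 := by
      have hsub : {x | 0 < ‖f x‖} ⊆ ⋃ n : ℕ, {x | 1 / ((n:ℝ) + 1) < ‖f x‖} := by
        intro x hx
        obtain ⟨n, hn⟩ := exists_nat_one_div_lt (show (0:ℝ) < ‖f x‖ from hx)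
        exact mem_iUnion.mpr ⟨n, hn⟩
      refine measure_mono_null hsub (measure_iUnion_null fun n => ?_)
      have hl : (0:ℝ) < 1 / ((n:ℝ) + 1) := by positivity
      have := hA _ hl
      rw [hA0, nonpos_iff_eq_zero, mul_eq_zero] at this
      rcases this with h | h
      · exact absurd h (ENNReal.ofReal_pos.mpr hl).ne'
      · rcases (ENNReal.rpow_eq_zero_iff.mp h) with ⟨h1, _⟩ | ⟨_, h2⟩
        · exact h1
        · exact absurd h2 (by positivity : (0:ℝ) < 1/α).asymm
    have hae : ∀ᵐ x ∂μ, (‖f x‖₊ : ℝ≥0∞) ^ q = 0 := by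
      have : ∀ᵐ x ∂μ, ¬ (0 < ‖f x‖) := (measure_eq_zero_iff_ae_notMem.mp hnull)
      filter_upwards [this] with x hx
      have hx0 : f x = 0 := norm_eq_zero.mp (le_antisymm (not_lt.mp hx) (norm_nonneg _))
      simp [hx0, ENNReal.zero_rpow_of_pos hq]
    rw [lintegral_congr_ae (ae_restrict_of_ae hae), lintegral_zero]
    exact zero_le
  -- main case
  set t : ℝ≥0∞ := A * μ E ^ (-(1/α)) with ht
  have hrp0 : (0:ℝ≥0∞) < μ E ^ (-(1/α)) := ENNReal.rpow_pos (hE0.bot_lt) hE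
  have hrptop : μ E ^ (-(1/α)) ≠ ∞ := by
    rw [ENNReal.rpow_neg, Ne, ENNReal.inv_eq_top]
    exact (ENNReal.rpow_pos (hE0.bot_lt) hE).ne'
  have ht0 : t ≠ 0 := mul_ne_zero hA0 hrp0.ne'
  have httop : t ≠ ∞ := ENNReal.mul_ne_top hAtop hrptop
  set T := t.toReal with hT
  have hTpos : 0 < T := ENNReal.toReal_pos ht0 httop
  have hofT : ENNReal.ofReal T = t := ENNReal.ofReal_toReal httop
  refine le_trans (kolmo_trunc hf hq hA hα E hTpos) ?_
  have htq : ∀ s : ℝ, ENNReal.ofReal (T ^ s) = A ^ s * μ E ^ (-(1/α) * s) := by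
    intro s
    rw [← ENNReal.ofReal_rpow_of_pos hTpos, hofT, ht,
      ENNReal.mul_rpow_of_ne_top hAtop hrptop, ENNReal.rpow_mul]
  have e1 : ENNReal.ofReal (T ^ q) * μ E = A ^ q * μ E ^ (1 - q / α) := by
    rw [htq q, mul_assoc]
    congr 1
    rw [show (1 - q/α : ℝ) = -(1/α)*q + 1 by field_simp; ring, ENNReal.rpow_add _ _ hE0 hE,
      ENNReal.rpow_one]
  have e2 : A ^ α * ENNReal.ofReal (T ^ (q - α)) = A ^ q * μ E ^ (1 - q / α) := by
    rw [htq (q - α), ← mul_assoc, ← ENNReal.rpow_add _ _ hA0 hAtop]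
    congr 2
    · ring
    · field_simp
      ring
  rw [e1, e2]
  exact le_of_eq (by ring)

end aux

/-- Kolmogorov-type counting estimate. -/
theorem kolmogorov_counting [MeasurableSpace X] (μ : Measure X) (d : X → X → ℝ)
    (κ : ℝ) (hκ : 1 ≤ κ)
    (hsymm : ∀ x y, d x y = d y x) (hd0 : ∀ x, d x x = 0) (hdnn : ∀ x y, 0 ≤ d x y)
    (htri : ∀ x y z, d x y ≤ κ * (d x z + d z y))
    (hmeas : ∀ x r, MeasurableSet (qball d x r))
    (φ : ℝ → ℝ) (hφmono : Monotone φ)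
    (a b : ℝ) (ha : 0 < a) (hab : a ≤ b)
    (hφ : ∀ (x : X) (r : ℝ), 0 < r →
      ENNReal.ofReal (a * φ r) ≤ μ (qball d x r) ∧
      μ (qball d x r) ≤ ENNReal.ofReal (b * φ r))
    (q α : ℝ) (hq : 1 ≤ q) (hqα : q < α) :
    ∃ C : ℝ, 0 < C ∧
      ∀ (ρ : ℝ), 1 < ρ → ∀ (m : ℤ),
      ∀ (E : ℕ → Set X), (∀ j, MeasurableSet (E j)) →
        Pairwise (Function.onFun Disjoint E) →
        (∀ j, ∃ z z' : X, qball d z (ρ ^ m) ⊆ E j ∧ E j ⊆ qball d z' (ρ ^ (m + 1))) →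
      ∀ (f : X → ℂ), Measurable f →
      ∀ A : ℝ≥0∞, A ≠ ∞ →
        (∀ l : ℝ, 0 < l → ENNReal.ofReal l * (μ {x | l < ‖f x‖}) ^ (1 / α) ≤ A) →
      ∀ lam : ℝ, 0 < lam →
      ∀ S : Finset ℕ, (∀ j ∈ S, ENNReal.ofReal lam < ∫⁻ x in E j, (‖f x‖₊ : ℝ≥0∞) ^ q ∂μ) →
        (S.card : ℝ≥0∞) ≤
          ENNReal.ofReal (C * φ (ρ ^ (m + 1)) ^ (α / q - 1) * lam ^ (-(α / q))) * A ^ α := by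
  have hq0 : (0:ℝ) < q := lt_of_lt_of_le one_pos hq
  have hα0 : (0:ℝ) < α := lt_trans hq0 hqα
  set Ck : ℝ≥0∞ :=
    (1 : ℝ≥0∞) + ENNReal.ofReal (2 ^ q) * (1 - ENNReal.ofReal (2 ^ (q - α)))⁻¹ with hCk
  have hCktop : Ck ≠ ∞ := kolmo_C_lt_top hq0 hqα
  have hCk0 : Ck ≠ 0 := (zero_lt_one.trans_le le_self_add).ne'
  have hCkrp0 : Ck ^ (α / q) ≠ 0 := (ENNReal.rpow_pos hCk0.bot_lt hCktop).ne'
  have hCkrptop : Ck ^ (α / q) ≠ ∞ :=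
    ENNReal.rpow_ne_top_of_nonneg (by positivity) hCktop
  set creal : ℝ := (Ck ^ (α / q)).toReal with hcreal
  have hcrealpos : 0 < creal := ENNReal.toReal_pos hCkrp0 hCkrptop
  have hofcreal : ENNReal.ofReal creal = Ck ^ (α / q) := ENNReal.ofReal_toReal hCkrptop
  have hb0 : (0:ℝ) < b := lt_of_lt_of_le ha hab
  refine ⟨creal * b ^ (α / q - 1), by positivity, ?_⟩
  intro ρ hρ m E hEmeas hEdisj hEball f hf A hAtop hA lam hlam S hS
  have hr : (0:ℝ) < ρ ^ (m + 1) := zpow_pos (by linarith) _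
  -- the covering-ball measure bound
  rcases le_or_gt (φ (ρ ^ (m + 1))) 0 with hφ0 | hφ0
  · -- degenerate case: all E j are null, so S is empty
    have hSempty : S = ∅ := by
      refine Finset.eq_empty_of_forall_notMem fun j hj => ?_
      obtain ⟨z, z', _, hsub⟩ := hEball j
      have hEj0 : μ (E j) = 0 := by
        refine le_antisymm ?_ zero_le
        calc μ (E j) ≤ μ (qball d z' (ρ ^ (m + 1))) := measure_mono hsub
          _ ≤ ENNReal.ofReal (b * φ (ρ ^ (m + 1))) := (hφ z' _ hr).2
          _ = 0 := ENNReal.ofReal_eq_zero.mpr (mul_nonpos_of_nonneg_of_nonpos hb0.le hφ0)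
      have := hS j hj
      rw [Measure.restrict_eq_zero.mpr hEj0, lintegral_zero_measure] at this
      exact (ENNReal.not_lt_zero this).elim
    simp [hSempty]
  -- main case
  set M : ℝ≥0∞ := ENNReal.ofReal (b * φ (ρ ^ (m + 1))) with hM
  have hMj : ∀ j, μ (E j) ≤ M := by
    intro j
    obtain ⟨z, z', _, hsub⟩ := hEball j
    exact (measure_mono hsub).trans (hφ z' _ hr).2
  set N : ℝ≥0∞ := (S.card : ℝ≥0∞) with hN
  have hNtop : N ≠ ∞ := ENNReal.natCast_ne_top _
  rcases eq_or_ne N 0 with hN0 | hN0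
  · exact hN0.le.trans zero_le
  set U : Set X := ⋃ j ∈ S, E j with hU
  have hUmeas : MeasurableSet U := S.measurableSet_biUnion fun j _ => hEmeas j
  have hUM : μ U ≤ N * M := by
    calc μ U ≤ ∑ j ∈ S, μ (E j) := measure_biUnion_finset_le S E
      _ ≤ ∑ _j ∈ S, M := Finset.sum_le_sum fun j _ => hMj j
      _ = N * M := by rw [Finset.sum_const, nsmul_eq_mul]
  have hUtop : μ U ≠ ∞ :=
    (hUM.trans_lt (ENNReal.mul_lt_top hNtop.lt_top ENNReal.ofReal_lt_top)).ne
  have step1 : N * ENNReal.ofReal lam ≤ ∫⁻ x in U, (‖f x‖₊ : ℝ≥0∞) ^ q ∂μ := by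
    rw [hU, lintegral_biUnion_finset
      (fun i _ j _ hij => hEdisj hij) (fun j _ => hEmeas j)]
    calc N * ENNReal.ofReal lam = ∑ _j ∈ S, ENNReal.ofReal lam := by
          rw [Finset.sum_const, nsmul_eq_mul]
      _ ≤ _ := Finset.sum_le_sum fun j hj => (hS j hj).le
  have step2 : N * ENNReal.ofReal lam ≤ Ck * A ^ q * M ^ (1 - q / α) * N ^ (1 - q / α) := by
    refine step1.trans ((kolmogorov_ineq hf hq0 hqα hα0 hAtop hA U hUtop).trans ?_)
    rw [mul_assoc (Ck * A ^ q)]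
    refine mul_le_mul_right ?_ _
    calc μ U ^ (1 - q / α) ≤ (N * M) ^ (1 - q / α) :=
          ENNReal.rpow_le_rpow hUM (by rw [sub_nonneg]; exact (div_le_one hα0).mpr hqα.le)
      _ = M ^ (1 - q / α) * N ^ (1 - q / α) := by
          rw [ENNReal.mul_rpow_of_nonneg _ _ (by rw [sub_nonneg]; exact (div_le_one hα0).mpr hqα.le)]
          ring
  have hNrp0 : N ^ (1 - q / α) ≠ 0 := (ENNReal.rpow_pos hN0.bot_lt hNtop).ne'
  have hNrptop : N ^ (1 - q / α) ≠ ∞ :=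
    ENNReal.rpow_ne_top_of_nonneg (by rw [sub_nonneg]; exact (div_le_one hα0).mpr hqα.le) hNtop
  have step3 : N ^ (q / α) * ENNReal.ofReal lam ≤ Ck * A ^ q * M ^ (1 - q / α) := by
    rw [← ENNReal.mul_le_mul_iff_left hNrp0 hNrptop]
    calc N ^ (q / α) * ENNReal.ofReal lam * N ^ (1 - q / α)
        = N * ENNReal.ofReal lam := by
          rw [mul_right_comm, ← ENNReal.rpow_add _ _ hN0 hNtop,
            show (q/α : ℝ) + (1 - q/α) = 1 by ring, ENNReal.rpow_one]
      _ ≤ Ck * A ^ q * M ^ (1 - q / α) * N ^ (1 - q / α) := step2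
  have step4 : N ^ (q / α) ≤ Ck * A ^ q * M ^ (1 - q / α) * (ENNReal.ofReal lam)⁻¹ := by
    have hc : (ENNReal.ofReal lam) ≠ 0 := (ENNReal.ofReal_pos.mpr hlam).ne'
    rw [← ENNReal.mul_le_mul_iff_left hc ENNReal.ofReal_ne_top,
      mul_assoc _ (ENNReal.ofReal lam)⁻¹ (ENNReal.ofReal lam),
      ENNReal.inv_mul_cancel hc ENNReal.ofReal_ne_top, mul_one]
    exact step3
  have step5 : N ≤ (Ck * A ^ q * M ^ (1 - q / α) * (ENNReal.ofReal lam)⁻¹) ^ (α / q) := by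
    calc N = (N ^ (q / α)) ^ (α / q) := by
          rw [← ENNReal.rpow_mul, show (q/α) * (α/q) = (1:ℝ) by field_simp, ENNReal.rpow_one]
      _ ≤ _ := ENNReal.rpow_le_rpow step4 (by positivity)
  refine step5.trans (le_of_eq ?_)
  have hexp : (0:ℝ) ≤ α / q := by positivity
  rw [ENNReal.mul_rpow_of_nonneg _ _ hexp, ENNReal.mul_rpow_of_nonneg _ _ hexp,
    ENNReal.mul_rpow_of_nonneg _ _ hexp, ← ENNReal.rpow_mul A, ← ENNReal.rpow_mul M,
    show q * (α / q) = α by field_simp,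
    show (1 - q / α) * (α / q) = α / q - 1 by field_simp,
    ENNReal.inv_rpow, ← ENNReal.rpow_neg, ← hofcreal, hM,
    ENNReal.ofReal_rpow_of_pos (show (0:ℝ) < b * φ (ρ ^ (m + 1)) by positivity),
    ENNReal.ofReal_rpow_of_pos hlam,
    Real.mul_rpow hb0.le hφ0.le,
    show creal * b ^ (α/q-1) * φ (ρ^(m+1)) ^ (α/q-1) * lam ^ (-(α/q))
      = creal * (b ^ (α/q-1) * φ (ρ^(m+1)) ^ (α/q-1)) * lam ^ (-(α/q)) by ring,
    ENNReal.ofReal_mul (by positivity), ENNReal.ofReal_mul (by positivity)]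
  ring_nf
  have h1 : (0:ℝ) ≤ b ^ (-1 + α * q⁻¹) := Real.rpow_nonneg hb0.le _
  have h2 : (0:ℝ) ≤ φ (ρ ^ (1 + m)) ^ (-1 + α * q⁻¹) :=
    Real.rpow_nonneg (by rw [add_comm]; exact hφ0.le) _
  rw [ENNReal.ofReal_mul (mul_nonneg h1 h2), ENNReal.ofReal_mul h1]
  ring
end
end
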